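/- Let $p$ be a prime of the form $p = 3f+1$ and write $p = a_3^2 + 3 b_3^2$ with $a_3 \equiv 1 \pmod 3$. Then $\binom{2f}{f} \equiv 2a_3 \pmod p$ if $b_3 \equiv 0 \pmod 3$, $\binom{2f}{f} \equiv -a_3 - 3b_3 \pmod p$ if $b_3 \equiv 1 \pmod 3$, and $\binom{2f}{f} \equiv -a_3 + 3b_3 \pmod p$ if $b_3 \equiv 2 \pmod 3$. -/

import Mathlib

-- Uniqueness of representation 4p = A^2 + 27 B^2 (up to signs)
lemma aux_unique_rep (p : ℕ) (hp : p.Prime) (A B A' B' : ℤ)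
    (h1 : A ^ 2 + 27 * B ^ 2 = 4 * p) (h2 : A' ^ 2 + 27 * B' ^ 2 = 4 * p) :
    A = A' ∨ A = -A' := by
  have hpZ : Prime (p : ℤ) := Int.prime_iff_natAbs_prime.mpr (by simpa using hp)
  have hp2 : (2 : ℤ) ≤ p := by exact_mod_cast hp.two_le
  have hdvd : (p : ℤ) ∣ (A * B' - A' * B) * (A * B' + A' * B) := by
    refine ⟨4 * (B' ^ 2 - B ^ 2), ?_⟩
    linear_combination B' ^ 2 * h1 - B ^ 2 * h2
  have key : ∀ V W : ℤ, (p : ℤ) ∣ V → W ^ 2 + 27 * V ^ 2 = 16 * (p:ℤ) ^ 2 → V = 0 := by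
    intro V W hV hid
    by_contra hV0
    have h1 : (p : ℤ) ≤ |V| := Int.le_of_dvd (abs_pos.mpr hV0) ((dvd_abs _ _).mpr hV)
    nlinarith [sq_nonneg W, sq_abs V, abs_nonneg V]
  have hBB : B ^ 2 = B' ^ 2 → (A = A' ∨ A = -A') := by
    intro hB
    have hA2 : A ^ 2 = A' ^ 2 := by linarith
    have : (A - A') * (A + A') = 0 := by linear_combination hA2
    rcases mul_eq_zero.mp this with h | h
    · left; linarith
    · right; linarith
  rcases hpZ.dvd_mul.mp hdvd with hV | hV
  · have hid : (A * A' + 27 * B * B') ^ 2 + 27 * (A * B' - A' * B) ^ 2 = 16 * (p:ℤ) ^ 2 := by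
      linear_combination (A' ^ 2 + 27 * B' ^ 2) * h1 + 4 * (p : ℤ) * h2
    have hV0 := key _ _ hV hid
    apply hBB
    have : 4 * (p : ℤ) * (B' ^ 2 - B ^ 2) = 0 := by
      linear_combination (A*B' + A'*B) * hV0 - B' ^ 2 * h1 + B ^ 2 * h2
    have := mul_eq_zero.mp this
    rcases this with h | h
    · exact absurd h (by positivity)
    · linarith
  · have hid : (A * A' - 27 * B * B') ^ 2 + 27 * (A * B' + A' * B) ^ 2 = 16 * (p:ℤ) ^ 2 := by
      linear_combination (A' ^ 2 + 27 * B' ^ 2) * h1 + 4 * (p : ℤ) * h2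
    have hV0 := key _ _ hV hid
    apply hBB
    have : 4 * (p : ℤ) * (B' ^ 2 - B ^ 2) = 0 := by
      linear_combination (A*B' - A'*B) * hV0 - B' ^ 2 * h1 + B ^ 2 * h2
    have hne : 4 * (p:ℤ) ≠ 0 := by positivity
    rcases mul_eq_zero.mp this with h | h
    · exact absurd h hne
    · linarith

open Finset in
set_option maxHeartbeats 2000000 in
lemma aux_core (p f : ℕ) (hp : p.Prime) (hpf : p = 3 * f + 1) :
    ∃ X Y : ℤ, X ^ 2 - X * Y + Y ^ 2 = p ∧ (3 ∣ X + 1) ∧ (3 ∣ Y) ∧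
      ((((2 * f).choose f : ℕ) : ℤ) : ZMod p) = ((Y - 2 * X : ℤ) : ZMod p) := by
  haveI : Fact p.Prime := ⟨hp⟩
  have hf2 : 2 ≤ f := by
    by_contra h
    interval_cases f <;> simp_all (config := {decide := true})
  have hfeven : Even f := by
    rw [Nat.even_iff]
    by_contra h
    have h2 : p % 2 = 0 := by omega
    have := (Nat.Prime.even_iff hp).mp (Nat.even_iff.mpr h2)
    omega
  -- ζ : primitive cube root of unity in ZMod p, with a non-cube witness g
  obtain ⟨ζ, g, hζdef, hζ3, hζ1⟩ :
      ∃ (ζ : ZMod p) (g : (ZMod p)ˣ), ζ = (g : ZMod p) ^ f ∧ ζ ^ 3 = 1 ∧ ζ ≠ 1 := by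
    obtain ⟨g, hg⟩ := IsCyclic.exists_generator (α := (ZMod p)ˣ)
    have horder : orderOf g = 3 * f := by
      rw [orderOf_eq_card_of_forall_mem_zpowers hg, Nat.card_eq_fintype_card,
        ZMod.card_units_eq_totient, Nat.totient_prime hp]
      omega
    refine ⟨(g : ZMod p) ^ f, g, rfl, ?_, ?_⟩
    · rw [← pow_mul]
      have h : (g : (ZMod p)ˣ) ^ (f * 3) = 1 := by
        apply orderOf_dvd_iff_pow_eq_one.mp
        rw [horder]; exact ⟨1, by ring⟩
      have h2 := congrArg (Units.val) h
      push_cast at h2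
      exact h2
    · intro h
      have h1 : (g ^ f : (ZMod p)ˣ) = 1 := Units.ext (by push_cast; exact h)
      have h2 := orderOf_dvd_of_pow_eq_one h1
      rw [horder] at h2
      have := Nat.le_of_dvd (by omega) h2
      omega
  have hζ0 : ζ ≠ 0 := by
    intro h
    have h1 : (1 : ZMod p) = 0 := by rw [← hζ3, h, zero_pow (by norm_num)]
    simp at h1
  have hζq : ζ ^ 2 + ζ + 1 = 0 := by
    have h : (ζ - 1) * (ζ ^ 2 + ζ + 1) = 0 := by linear_combination hζ3
    rcases mul_eq_zero.mp h with h | h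
    · exact absurd (sub_eq_zero.mp h) hζ1
    · exact h
  have hζ21 : ζ ^ 2 ≠ 1 := by
    intro h
    apply hζ1
    have h1 : ζ ^ 3 = ζ := by rw [pow_succ, h, one_mul]
    rw [hζ3] at h1
    exact h1.symm
  have hζ2ζ : ζ ^ 2 ≠ ζ := by
    intro h
    have h1 : ζ * (ζ - 1) = 0 := by linear_combination h
    rcases mul_eq_zero.mp h1 with h2 | h2
    · exact hζ0 h2
    · exact hζ1 (sub_eq_zero.mp h2)
  have htri : ∀ s : ZMod p, s ^ 3 = 1 → s = 1 ∨ s = ζ ∨ s = ζ ^ 2 := by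
    intro s hs
    have h : (s - 1) * ((s - ζ) * (s - ζ ^ 2)) = 0 := by
      linear_combination hs + (s - s ^ 2) * hζq + (s - 1) * hζ3
    rcases mul_eq_zero.mp h with h | h
    · exact Or.inl (sub_eq_zero.mp h)
    · rcases mul_eq_zero.mp h with h | h
      · exact Or.inr (Or.inl (sub_eq_zero.mp h))
      · exact Or.inr (Or.inr (sub_eq_zero.mp h))
  have e1 : ζ * ζ ^ 2 = 1 := by rw [← pow_succ', hζ3]
  have e2 : ζ ^ 2 * ζ ^ 2 = ζ := by
    rw [← pow_add, show 2 + 2 = 3 + 1 by norm_num, pow_succ, hζ3, one_mul]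
  have hcube : ∀ t : ZMod p, t ≠ 0 → (t ^ f) ^ 3 = 1 := by
    intro t ht
    rw [← pow_mul, show f * 3 = p - 1 by omega]
    exact ZMod.pow_card_sub_one_eq_one ht
  -- K and ω
  set K := CyclotomicField 3 ℚ with hK
  haveI : CharZero K := charZero_of_injective_algebraMap (algebraMap ℚ K).injective
  haveI : IsCyclotomicExtension {3} ℚ K := CyclotomicField.isCyclotomicExtension 3 ℚ
  set ω : K := IsCyclotomicExtension.zeta 3 ℚ K with hωdef
  have hω : IsPrimitiveRoot ω 3 := IsCyclotomicExtension.zeta_spec 3 ℚ K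
  have hω3 : ω ^ 3 = 1 := hω.pow_eq_one
  have hω1 : ω ≠ 1 := hω.ne_one (by norm_num)
  have hωq : ω ^ 2 + ω + 1 = 0 := by
    have h : (ω - 1) * (ω ^ 2 + ω + 1) = 0 := by linear_combination hω3
    rcases mul_eq_zero.mp h with h | h
    · exact absurd (sub_eq_zero.mp h) hω1
    · exact h
  have hω21 : ω ^ 2 ≠ 1 := fun h => hω.pow_ne_one_of_pos_of_lt (by norm_num) (by norm_num) h
  have o1 : ω * ω ^ 2 = 1 := by rw [← pow_succ', hω3]
  have o2 : ω ^ 2 * ω ^ 2 = ω := by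
    rw [← pow_add, show 2 + 2 = 3 + 1 by norm_num, pow_succ, hω3, one_mul]
  have keyIndep : ∀ x y : ℤ, (x : K) + y * ω = 0 → x = 0 ∧ y = 0 := by
    intro x y h
    have h2 : ((x ^ 2 - x * y + y ^ 2 : ℤ) : K) = 0 := by
      push_cast +zetaDelta
      linear_combination ((x : K) - y - y * ω) * h + (y : K) ^ 2 * hωq
    have h3 : x ^ 2 - x * y + y ^ 2 = 0 := by exact_mod_cast h2
    constructor <;> nlinarith [sq_nonneg (2 * x - y), sq_nonneg (2 * y - x), sq_nonneg (x + y)]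
  have adjoin_coords : ∀ z ∈ Algebra.adjoin ℤ {ω}, ∃ u v : ℤ, z = (u : K) + v * ω := by
    intro z hz
    refine Algebra.adjoin_induction ?_ ?_ ?_ ?_ hz
    · rintro x (rfl : x = ω)
      exact ⟨0, 1, by push_cast; ring⟩
    · intro r
      exact ⟨r, 0, by rw [eq_intCast (algebraMap ℤ K)]; push_cast +zetaDelta; ring⟩
    · rintro x y - - ⟨u, v, rfl⟩ ⟨u', v', rfl⟩
      exact ⟨u + u', v + v', by push_cast; ring⟩
    · rintro x y - - ⟨u, v, rfl⟩ ⟨u', v', rfl⟩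
      refine ⟨u * u' - v * v', u * v' + v * u' - v * v', ?_⟩
      push_cast +zetaDelta
      linear_combination ((v : K) * v') * hωq
  -- the function M on cube roots of unity
  obtain ⟨M, hM1, hMζ, hMζ2⟩ : ∃ M : ZMod p → K, M 1 = 1 ∧ M ζ = ω ∧ M (ζ ^ 2) = ω ^ 2 := by
    refine ⟨fun s => if s = 1 then 1 else if s = ζ then ω else ω ^ 2, ?_, ?_, ?_⟩
    · simp
    · show (if ζ = 1 then (1:K) else if ζ = ζ then ω else ω ^ 2) = ω
      rw [if_neg hζ1, if_pos rfl]
    · show (if ζ ^ 2 = 1 then (1:K) else if ζ ^ 2 = ζ then ω else ω ^ 2) = ω ^ 2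
      rw [if_neg hζ21, if_neg hζ2ζ]
  have hM3 : ∀ s : ZMod p, s ^ 3 = 1 → (M s) ^ 3 = 1 := by
    intro s hs
    rcases htri s hs with h | h | h <;> rw [h]
    · rw [hM1, one_pow]
    · rw [hMζ]; exact hω3
    · rw [hMζ2, ← pow_mul, show 2 * 3 = 3 * 2 by norm_num, pow_mul, hω3, one_pow]
  have hMmul : ∀ s t : ZMod p, s ^ 3 = 1 → t ^ 3 = 1 → M (s * t) = M s * M t := by
    intro s t hs ht
    rcases htri s hs with h | h | h <;> rcases htri t ht with h' | h' | h' <;> rw [h, h']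
    · rw [one_mul, hM1, one_mul]
    · rw [one_mul, hM1, one_mul]
    · rw [one_mul, hM1, one_mul]
    · rw [mul_one, hM1, mul_one]
    · rw [show ζ * ζ = ζ ^ 2 by ring, hMζ2, hMζ]; ring
    · rw [e1, hM1, hMζ, hMζ2]; linear_combination -o1
    · rw [mul_one, hM1, mul_one]
    · rw [mul_comm, e1, hM1, hMζ2, hMζ]; linear_combination -o1
    · rw [e2, hMζ, hMζ2]; linear_combination -o2
  -- the cubic character
  let χ : MulChar (ZMod p) K :=
    { toFun := fun t => if t = 0 then 0 else M (t ^ f)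
      map_one' := by
        show (if (1 : ZMod p) = 0 then (0:K) else M (1 ^ f)) = 1
        rw [if_neg one_ne_zero, one_pow, hM1]
      map_mul' := by
        intro x y
        show (if x * y = 0 then 0 else M ((x * y) ^ f)) =
          (if x = 0 then 0 else M (x ^ f)) * (if y = 0 then 0 else M (y ^ f))
        rcases eq_or_ne x 0 with rfl | hx
        · simp
        rcases eq_or_ne y 0 with rfl | hy
        · simp
        rw [if_neg (mul_ne_zero hx hy), if_neg hx, if_neg hy, mul_pow]
        exact hMmul _ _ (hcube x hx) (hcube y hy)
      map_nonunit' := by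
        intro a ha
        rw [isUnit_iff_ne_zero, not_not] at ha
        show (if a = 0 then 0 else M (a ^ f)) = 0
        rw [if_pos ha] }
  have hχapp : ∀ t : ZMod p, χ t = if t = 0 then 0 else M (t ^ f) := fun t => rfl
  have hχ3 : χ ^ 3 = 1 := by
    apply MulChar.ext
    intro a
    rw [MulChar.pow_apply_coe, MulChar.one_apply_coe, hχapp, if_neg (Units.ne_zero a)]
    exact hM3 _ (hcube _ (Units.ne_zero a))
  have hg0 : (g : ZMod p) ≠ 0 := Units.ne_zero g
  have hχg : χ (g : ZMod p) = ω := by rw [hχapp, if_neg hg0, ← hζdef, hMζ]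
  have hχ1 : χ ≠ 1 := by
    intro h
    apply hω1
    rw [← hχg, h, MulChar.one_apply g.isUnit]
  have hχχ : χ * χ ≠ 1 := by
    intro h
    apply hω21
    have h2 : (χ * χ) (g : ZMod p) = 1 := by rw [h, MulChar.one_apply g.isUnit]
    rw [MulChar.mul_apply, hχg] at h2
    rw [sq]; exact h2
  have hχinv : χ⁻¹ = χ ^ 2 := by
    have h : χ ^ 2 * χ = 1 := by rw [← pow_succ]; exact hχ3
    exact (eq_inv_of_mul_eq_one_left h).symm
  -- coordinate functions
  obtain ⟨Af, Bf, hS0, hS1, hSζ, hSζ2⟩ : ∃ Af Bf : ZMod p → ℤ,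
      (∀ t, t = 0 → Af t = 0 ∧ Bf t = 0) ∧
      (∀ t, t ≠ 0 → t ^ f = 1 → Af t = 1 ∧ Bf t = 0) ∧
      (∀ t, t ≠ 0 → t ^ f = ζ → Af t = 0 ∧ Bf t = 1) ∧
      (∀ t, t ≠ 0 → t ^ f = ζ ^ 2 → Af t = -1 ∧ Bf t = -1) := by
    refine ⟨fun t => if t = 0 then 0 else if t ^ f = 1 then 1 else if t ^ f = ζ then 0 else -1,
      fun t => if t = 0 then 0 else if t ^ f = 1 then 0 else if t ^ f = ζ then 1 else -1,
      ?_, ?_, ?_, ?_⟩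
    · intro t h1
      constructor <;> simp only [if_pos h1]
    · intro t h1 h2
      constructor <;> simp only [if_neg h1, if_pos h2]
    · intro t h1 h2
      have hn1 : t ^ f ≠ 1 := by rw [h2]; exact hζ1
      constructor <;> simp only [if_neg h1, if_neg hn1, if_pos h2]
    · intro t h1 h2
      have hn1 : t ^ f ≠ 1 := by rw [h2]; exact hζ21
      have hn2 : t ^ f ≠ ζ := by rw [h2]; exact hζ2ζ
      constructor <;> simp only [if_neg h1, if_neg hn1, if_neg hn2]
  have hAB : ∀ t : ZMod p, χ t = (Af t : K) + (Bf t : K) * ω := by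
    intro t
    rcases eq_or_ne t 0 with rfl | ht
    · obtain ⟨ha, hb⟩ := hS0 0 rfl
      rw [hχapp, if_pos rfl, ha, hb]; norm_num
    · rw [hχapp, if_neg ht]
      rcases htri _ (hcube t ht) with h | h | h
      · obtain ⟨ha, hb⟩ := hS1 t ht h; rw [h, hM1, ha, hb]; norm_num
      · obtain ⟨ha, hb⟩ := hSζ t ht h; rw [h, hMζ, ha, hb]; norm_num
      · obtain ⟨ha, hb⟩ := hSζ2 t ht h; rw [h, hMζ2, ha, hb]; push_cast
        linear_combination hωq
  have hABinv : ∀ t : ZMod p, χ⁻¹ t = ((Af t - Bf t : ℤ) : K) + ((-(Bf t) : ℤ) : K) * ω := by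
    intro t
    rw [hχinv, MulChar.pow_apply' χ two_ne_zero t]
    rcases eq_or_ne t 0 with rfl | ht
    · obtain ⟨ha, hb⟩ := hS0 0 rfl
      rw [hχapp, if_pos rfl, ha, hb]; norm_num
    · rw [hχapp, if_neg ht]
      rcases htri _ (hcube t ht) with h | h | h
      · obtain ⟨ha, hb⟩ := hS1 t ht h; rw [h, hM1, ha, hb]; norm_num
      · obtain ⟨ha, hb⟩ := hSζ t ht h; rw [h, hMζ, ha, hb]; push_cast
        linear_combination hωq
      · obtain ⟨ha, hb⟩ := hSζ2 t ht h; rw [h, hMζ2, ha, hb]; push_cast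
        linear_combination (ω : K) * hω3
  have hpow2f : ∀ t : ZMod p, t ^ (2 * f) = ((Af t : ℤ) : ZMod p) + ((Bf t : ℤ) : ZMod p) * ζ ^ 2 := by
    intro t
    rcases eq_or_ne t 0 with rfl | ht
    · obtain ⟨ha, hb⟩ := hS0 0 rfl
      rw [ha, hb, zero_pow (by omega)]; norm_num
    · have h2 : t ^ (2 * f) = (t ^ f) ^ 2 := by rw [← pow_mul, mul_comm]
      rcases htri _ (hcube t ht) with h | h | h
      · obtain ⟨ha, hb⟩ := hS1 t ht h; rw [h2, h, ha, hb]; norm_num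
      · obtain ⟨ha, hb⟩ := hSζ t ht h; rw [h2, h, ha, hb]; norm_num
      · obtain ⟨ha, hb⟩ := hSζ2 t ht h; rw [h2, h, ha, hb]; push_cast
        linear_combination (ζ : ZMod p) * hζ3 + hζq
  -- generic sum expansion
  have hexp : ∀ {R : Type} [CommRing R] (w : R), w ^ 2 + w + 1 = 0 →
      ∀ a b c d : ZMod p → ℤ,
      (∑ t : ZMod p, (((a t : R) + (b t : R) * w) * ((c t : R) + (d t : R) * w))) =
        ((∑ t : ZMod p, (a t * c t - b t * d t) : ℤ) : R) +
          ((∑ t : ZMod p, (a t * d t + b t * c t - b t * d t) : ℤ) : R) * w := by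
    intro R _ w hw a b c d
    have hpt : ∀ t : ZMod p, ((a t : R) + (b t : R) * w) * ((c t : R) + (d t : R) * w) =
        ((a t * c t - b t * d t : ℤ) : R) + ((a t * d t + b t * c t - b t * d t : ℤ) : R) * w := by
      intro t
      push_cast
      linear_combination ((b t : R) * (d t : R)) * hw
    rw [Finset.sum_congr rfl fun t _ => hpt t, Finset.sum_add_distrib, ← Finset.sum_mul]
    push_cast
    ring
  set C : ℕ := (2 * f).choose f with hCdef
  set Xi : ℤ := ∑ t : ZMod p, (Af t * Af (1 - t) - Bf t * Bf (1 - t)) with hXidef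
  set Yi : ℤ := ∑ t : ZMod p, (Af t * Bf (1 - t) + Bf t * Af (1 - t) - Bf t * Bf (1 - t)) with hYidef
  have hJ : jacobiSum χ χ = (Xi : K) + (Yi : K) * ω := by
    rw [jacobiSum, Finset.sum_congr rfl fun t _ => by rw [hAB t, hAB (1 - t)],
      hexp ω hωq Af Bf (fun t => Af (1 - t)) (fun t => Bf (1 - t))]
  have hJ2 : jacobiSum χ⁻¹ χ⁻¹ = ((Xi - Yi : ℤ) : K) + ((-Yi : ℤ) : K) * ω := by
    have e1' : (∑ t : ZMod p, ((Af t - Bf t) * (Af (1 - t) - Bf (1 - t)) - (-Bf t) * (-Bf (1 - t))))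
        = Xi - Yi := by
      rw [hXidef, hYidef, ← Finset.sum_sub_distrib]
      exact Finset.sum_congr rfl fun t _ => by ring
    have e2' : (∑ t : ZMod p, ((Af t - Bf t) * (-Bf (1 - t)) + (-Bf t) * (Af (1 - t) - Bf (1 - t))
        - (-Bf t) * (-Bf (1 - t)))) = -Yi := by
      have : ∀ t : ZMod p, (Af t - Bf t) * (-Bf (1 - t)) + (-Bf t) * (Af (1 - t) - Bf (1 - t))
          - (-Bf t) * (-Bf (1 - t)) =
          -(Af t * Bf (1 - t) + Bf t * Af (1 - t) - Bf t * Bf (1 - t)) := fun t => by ring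
      rw [Finset.sum_congr rfl fun t _ => this t, hYidef, ← Finset.sum_neg_distrib]
    rw [jacobiSum, Finset.sum_congr rfl fun t _ => by rw [hABinv t, hABinv (1 - t)],
      hexp ω hωq (fun t => Af t - Bf t) (fun t => -Bf t)
        (fun t => Af (1 - t) - Bf (1 - t)) (fun t => -Bf (1 - t)), e1', e2']
  have hcharne : ringChar K ≠ ringChar (ZMod p) := by
    rw [ringChar.eq_zero, ZMod.ringChar_zmod_n]
    exact fun h => hp.pos.ne (by omega)
  have hnorm : Xi ^ 2 - Xi * Yi + Yi ^ 2 = (p : ℤ) := by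
    have hJJ := jacobiSum_mul_jacobiSum_inv hcharne hχ1 hχ1 hχχ
    rw [hJ, hJ2, ZMod.card] at hJJ
    have h0 := keyIndep (Xi ^ 2 - Xi * Yi + Yi ^ 2 - p) 0
      (by push_cast [Int.cast_mul (α := K)] at hJJ ⊢; linear_combination hJJ + (Yi : K) ^ 2 * hωq)
    linarith [h0.1]
  have hcard3 : (3 : ℕ) ∣ Fintype.card (ZMod p) - 1 := by rw [ZMod.card]; omega
  obtain ⟨z, hzmem, hzeq⟩ :=
    exists_jacobiSum_eq_neg_one_add (by norm_num : (2:ℕ) < 3) hχ3 hχ3 hcard3 hω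
  obtain ⟨u, v, rfl⟩ := adjoin_coords z hzmem
  have hXY : (Xi : K) + (Yi : K) * ω = -1 + ((u : K) + (v : K) * ω) * (ω - 1) ^ 2 := by
    rw [← hJ, hzeq]
  have h0 := keyIndep (Xi - (3 * v - 1)) (Yi - (3 * v - 3 * u))
    (by push_cast [Int.cast_mul (α := K), Int.cast_ofNat (R := K)]; linear_combination hXY + ((u : K) - 2 * v) * hωq + (v : K) * hω3)
  have hX3 : (3 : ℤ) ∣ Xi + 1 := ⟨v, by linarith [h0.1]⟩
  have hY3 : (3 : ℤ) ∣ Yi := ⟨v - u, by linarith [h0.2]⟩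
  -- power sums
  have hps : ∀ m : ℕ, m < 3 * f → (∑ t : ZMod p, t ^ m) = 0 := by
    intro m hm
    exact FiniteField.sum_pow_lt_card_sub_one (K := ZMod p) m (by rw [ZMod.card]; omega)
  have hps1 : (∑ t : ZMod p, t ^ (3 * f)) = -1 := by
    have h1 : ∀ t : ZMod p, t ^ (3 * f) = 1 - (if t = 0 then 1 else 0) := by
      intro t
      rcases eq_or_ne t 0 with rfl | ht
      · rw [if_pos rfl, zero_pow (by omega)]; norm_num
      · rw [if_neg ht, show (3:ℕ) * f = p - 1 by omega, ZMod.pow_card_sub_one_eq_one ht]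
        norm_num
    rw [Finset.sum_congr rfl fun t _ => h1 t, Finset.sum_sub_distrib,
      Fintype.sum_ite_eq' (0 : ZMod p) (fun _ => (1 : ZMod p))]
    simp only [Finset.sum_const, Finset.card_univ, ZMod.card, nsmul_eq_mul, mul_one]
    rw [ZMod.natCast_self]
    ring
  have hkey : ∀ k, k ≤ 2 * f → (∑ t : ZMod p, t ^ (2 * f + k)) = if k = f then -1 else 0 := by
    intro k hk
    rcases lt_trichotomy k f with h | heq | h
    · rw [if_neg (by omega)]; exact hps _ (by omega)
    · rw [if_pos heq, heq, show 2 * f + f = 3 * f by ring]; exact hps1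
    · rw [if_neg (by omega)]
      have h1 : ∀ t : ZMod p, t ^ (2 * f + k) = t ^ (k - f) * t ^ (3 * f) := by
        intro t; rw [← pow_add, show k - f + 3 * f = 2 * f + k by omega]
      have h2 : ∀ t : ZMod p, t ^ (k - f) * t ^ (3 * f) = t ^ (k - f) := by
        intro t
        rcases eq_or_ne t 0 with rfl | ht
        · rw [zero_pow (by omega), zero_mul]
        · rw [show (3:ℕ) * f = p - 1 by omega, ZMod.pow_card_sub_one_eq_one ht, mul_one]
      rw [Finset.sum_congr rfl fun t _ => h1 t, Finset.sum_congr rfl fun t _ => h2 t]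
      exact hps _ (by omega)
  -- binomial sum
  have hbin : (∑ t : ZMod p, t ^ (2 * f) * (1 - t) ^ (2 * f)) = -(C : ZMod p) := by
    have h1 : ∀ t : ZMod p, t ^ (2 * f) * (1 - t) ^ (2 * f) =
        ∑ k ∈ Finset.range (2 * f + 1),
          (-1) ^ k * ((2 * f).choose k : ZMod p) * t ^ (2 * f + k) := by
      intro t
      rw [show (1 : ZMod p) - t = -t + 1 by ring, add_pow, Finset.mul_sum]
      exact Finset.sum_congr rfl fun k hk => by
        rw [neg_pow, one_pow, pow_add]; ring
    rw [Finset.sum_congr rfl fun t _ => h1 t, Finset.sum_comm]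
    have h2 : ∀ k ∈ Finset.range (2 * f + 1),
        (∑ t : ZMod p, (-1) ^ k * ((2 * f).choose k : ZMod p) * t ^ (2 * f + k)) =
          if k = f then (-1) ^ k * ((2 * f).choose k : ZMod p) * (-1) else 0 := by
      intro k hk
      rw [← Finset.mul_sum, hkey k (by have := Finset.mem_range.mp hk; omega)]
      split_ifs with h
      · rfl
      · rw [mul_zero]
    rw [Finset.sum_congr rfl h2, Finset.sum_ite_eq' (Finset.range (2 * f + 1)) f
      (fun k => (-1) ^ k * ((2 * f).choose k : ZMod p) * (-1)),
      if_pos (Finset.mem_range.mpr (by omega)), hfeven.neg_one_pow, hCdef]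
    ring
  -- the sum in coordinates
  have hSX : (∑ t : ZMod p, t ^ (2 * f) * (1 - t) ^ (2 * f)) =
      ((Xi : ZMod p)) + ((Yi : ZMod p)) * ζ ^ 2 := by
    have hζ2q : (ζ ^ 2) ^ 2 + ζ ^ 2 + 1 = 0 := by linear_combination ζ * hζ3 + hζq
    rw [Finset.sum_congr rfl fun t _ => by rw [hpow2f t, hpow2f (1 - t)],
      hexp (ζ ^ 2) hζ2q Af Bf (fun t => Af (1 - t)) (fun t => Bf (1 - t))]
  have hCne : (C : ZMod p) ≠ 0 := by
    rw [Ne, ZMod.natCast_eq_zero_iff]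
    intro hdvd
    have h1 : p ∣ (2 * f).factorial := by
      rw [← Nat.choose_mul_factorial_mul_factorial (by omega : f ≤ 2 * f)]
      exact Dvd.dvd.mul_right (Dvd.dvd.mul_right hdvd _) _
    have h2 := (Nat.Prime.dvd_factorial hp).mp h1
    omega
  have hfac0 : ((Xi : ZMod p) + (Yi : ZMod p) * ζ) * ((Xi : ZMod p) + (Yi : ZMod p) * ζ ^ 2) = 0 := by
    have h1 : ((Xi : ZMod p) + (Yi : ZMod p) * ζ) * ((Xi : ZMod p) + (Yi : ZMod p) * ζ ^ 2) =
        ((Xi ^ 2 - Xi * Yi + Yi ^ 2 : ℤ) : ZMod p) := by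
      push_cast
      linear_combination ((Xi : ZMod p) * (Yi : ZMod p)) * hζq + ((Yi : ZMod p) ^ 2) * hζ3
    rw [h1, hnorm]
    exact_mod_cast ZMod.natCast_self p
  have hfac : (Xi : ZMod p) + (Yi : ZMod p) * ζ = 0 := by
    rcases mul_eq_zero.mp hfac0 with h | h
    · exact h
    · exfalso
      apply hCne
      have h2 : -(C : ZMod p) = 0 := by rw [← hbin, hSX, h]
      exact neg_eq_zero.mp h2
  refine ⟨Xi, Yi, hnorm, hX3, hY3, ?_⟩
  push_cast
  linear_combination hbin - hSX + hfac - (Yi : ZMod p) * hζq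

theorem stmt_6 (p f : ℕ) (hp : p.Prime) (hpf : p = 3 * f + 1)
    (a3 b3 : ℤ) (hrep : (p : ℤ) = a3 ^ 2 + 3 * b3 ^ 2) (ha3 : a3 ≡ 1 [ZMOD 3]) :
    (b3 ≡ 0 [ZMOD 3] → ((2 * f).choose f : ℤ) ≡ 2 * a3 [ZMOD p]) ∧
    (b3 ≡ 1 [ZMOD 3] → ((2 * f).choose f : ℤ) ≡ -a3 - 3 * b3 [ZMOD p]) ∧
    (b3 ≡ 2 [ZMOD 3] → ((2 * f).choose f : ℤ) ≡ -a3 + 3 * b3 [ZMOD p]) := by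
  obtain ⟨X, Y, hnorm, hX3, hY3, hC⟩ := aux_core p f hp hpf
  have hCmod : (((2 * f).choose f : ℕ) : ℤ) ≡ Y - 2 * X [ZMOD (p : ℕ)] :=
    (ZMod.intCast_eq_intCast_iff _ _ _).mp hC
  have ha3' : a3 % 3 = 1 % 3 := ha3
  obtain ⟨d, hd⟩ := hY3
  have hL : (2 * X - Y) ^ 2 + 27 * d ^ 2 = 4 * p := by
    linear_combination 4 * hnorm + (-3 * Y - 9 * d) * hd
  refine ⟨?_, ?_, ?_⟩ <;> intro hb <;> have hb' : b3 % 3 = _ % 3 := hb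
  · obtain ⟨c, hc⟩ : ∃ c, b3 = 3 * c := ⟨b3 / 3, by omega⟩
    have h2 : (2 * a3) ^ 2 + 27 * (2 * c) ^ 2 = 4 * p := by
      linear_combination (-4) * hrep - 12 * (b3 + 3 * c) * hc
    rcases aux_unique_rep p hp (2 * X - Y) d (2 * a3) (2 * c) hL h2 with h | h
    · exfalso; omega
    · exact (show Y - 2 * X = 2 * a3 by omega) ▸ hCmod
  · obtain ⟨c, hc⟩ : ∃ c, a3 - b3 = 3 * c := ⟨(a3 - b3) / 3, by omega⟩
    have h2 : (a3 + 3 * b3) ^ 2 + 27 * c ^ 2 = 4 * p := by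
      linear_combination (-4) * hrep - 3 * (a3 - b3 + 3 * c) * hc
    rcases aux_unique_rep p hp (2 * X - Y) d (a3 + 3 * b3) c hL h2 with h | h
    · exact (show Y - 2 * X = -a3 - 3 * b3 by omega) ▸ hCmod
    · exfalso; omega
  · obtain ⟨c, hc⟩ : ∃ c, a3 + b3 = 3 * c := ⟨(a3 + b3) / 3, by omega⟩
    have h2 : (a3 - 3 * b3) ^ 2 + 27 * c ^ 2 = 4 * p := by
      linear_combination (-4) * hrep - 3 * (a3 + b3 + 3 * c) * hc
    rcases aux_unique_rep p hp (2 * X - Y) d (a3 - 3 * b3) c hL h2 with h | h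
    · exact (show Y - 2 * X = -a3 + 3 * b3 by omega) ▸ hCmod
    · exfalso; omega
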